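/- Suppose player 1 plays the good strategy s₁* (with parameter ε > 0) and player 2 plays an arbitrary memory strategy s₂. Then for every initial point x̄₁ ∈ 𝔖, the trajectory (x̄_t)_{t≥1} = ((x̄¹_t, x̄²_t))_{t≥1} of the dynamical system induced by the profile (s₁*, s₂) satisfies liminf_{t→∞} x̄¹_t ≥ 1 and limsup_{t→∞} x̄²_t ≤ 2. -/

import Mathlib

/- Repeated Prisoner's Dilemma with memory strategies (Smale).
   Actions: `true` = C (cooperate), `false` = D (defect). -/

/-- Points of the payoff plane. -/
abbrev Pt := ℝ × ℝ

/-- The vector payoff function of the Prisoner's Dilemma: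
    u(C,C)=(2,2), u(C,D)=(0,3), u(D,C)=(3,0), u(D,D)=(1,1). -/
def payoffPD : Bool → Bool → Pt
  | true,  true  => (2, 2)
  | true,  false => (0, 3)
  | false, true  => (3, 0)
  | false, false => (1, 1)

/-- 𝔖 = conv{(2,2),(0,3),(3,0),(1,1)}. -/
def SPD : Set Pt := convexHull ℝ {(2, 2), (0, 3), (3, 0), (1, 1)}

open Classical in
/-- Smale's good strategy of player 1 (with parameter ε):
    play C iff x₂ < x₁ + ε, x₁ ≥ 1 and x₂ ≤ 2. -/
noncomputable def good1 (ε : ℝ) (x : Pt) : Bool :=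
  if x.2 < x.1 + ε ∧ 1 ≤ x.1 ∧ x.2 ≤ 2 then true else false

/-- `x` is the trajectory (sequence of average payoffs), indexed from stage 1,
    of the dynamical system induced by `f = u ∘ s`, starting at `x 1 ∈ 𝔖`:
    x̄_{t+1} = (t·x̄_t + f(x̄_t))/(t+1). -/
def IsTrajPD (f : Pt → Pt) (x : ℕ → Pt) : Prop :=
  x 1 ∈ SPD ∧ ∀ t : ℕ, 1 ≤ t →
    x (t + 1) = ((t : ℝ) + 1)⁻¹ • ((t : ℝ) • x t + f (x t))

open Filter

/-- If player 1 plays the good strategy `good1 ε` and player 2 plays an arbitrary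
memory strategy `s₂`, then along every trajectory of average payoffs from any
initial point in 𝔖 we have liminf x̄¹_t ≥ 1 and limsup x̄²_t ≤ 2. -/
theorem stmt0 (ε : ℝ) (hε : 0 < ε) (s₂ : Pt → Bool) (x : ℕ → Pt)
    (hx : IsTrajPD (fun p => payoffPD (good1 ε p) (s₂ p)) x) :
    1 ≤ liminf (fun t => (x t).1) atTop ∧ limsup (fun t => (x t).2) atTop ≤ 2 := by
  -- Bounds on the initial point
  have h0 : (0 ≤ (x 1).1 ∧ (x 1).1 ≤ 3) ∧ 0 ≤ (x 1).2 ∧ (x 1).2 ≤ 3 := by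
    have hconv : Convex ℝ {q : Pt | (0 ≤ q.1 ∧ q.1 ≤ 3) ∧ 0 ≤ q.2 ∧ q.2 ≤ 3} := by
      intro a ha b hb s t hs ht hst
      obtain ⟨⟨ha1, ha1'⟩, ha2, ha3⟩ := ha
      obtain ⟨⟨hb1, hb1'⟩, hb2, hb3⟩ := hb
      refine ⟨⟨?_, ?_⟩, ?_, ?_⟩ <;>
        simp only [Prod.fst_add, Prod.snd_add, Prod.smul_fst, Prod.smul_snd,
          smul_eq_mul, Set.mem_setOf_eq] <;> nlinarith
    have hsub : SPD ⊆ {q : Pt | (0 ≤ q.1 ∧ q.1 ≤ 3) ∧ 0 ≤ q.2 ∧ q.2 ≤ 3} := by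
      rw [SPD]
      apply convexHull_min _ hconv
      intro q hq
      simp only [Set.mem_insert_iff, Set.mem_singleton_iff] at hq
      rcases hq with h | h | h | h <;> subst h <;> norm_num
    exact hsub hx.1
  -- Key invariant
  have key : ∀ t : ℕ, 1 ≤ t →
      ((t : ℝ) - 1 ≤ (t : ℝ) * (x t).1 ∧ (t : ℝ) * (x t).1 ≤ 3 * t) ∧
        (t : ℝ) * (x t).2 ≤ 2 * t + 1 ∧ 0 ≤ (t : ℝ) * (x t).2 := by
    intro t ht
    induction t, ht using Nat.le_induction with
    | base =>
      refine ⟨⟨?_, ?_⟩, ?_, ?_⟩ <;> push_cast <;> simp <;>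
        linarith [h0.1.1, h0.1.2, h0.2.1, h0.2.2]
    | succ t ht ih =>
      have hrec := hx.2 t ht
      have htpos : (0:ℝ) < (t : ℝ) + 1 := by positivity
      have ht1 : (1:ℝ) ≤ (t:ℝ) := by exact_mod_cast ht
      have h1 : ((t : ℝ) + 1) * (x (t+1)).1
          = (t : ℝ) * (x t).1 + (payoffPD (good1 ε (x t)) (s₂ (x t))).1 := by
        rw [hrec]
        simp only [Prod.fst_add, Prod.smul_fst, smul_eq_mul]
        field_simp
      have h2 : ((t : ℝ) + 1) * (x (t+1)).2
          = (t : ℝ) * (x t).2 + (payoffPD (good1 ε (x t)) (s₂ (x t))).2 := by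
        rw [hrec]
        simp only [Prod.snd_add, Prod.smul_snd, smul_eq_mul]
        field_simp
      have hcast : ((t+1 : ℕ) : ℝ) = (t : ℝ) + 1 := by push_cast; ring
      rw [hcast, h1, h2]
      obtain ⟨⟨ih1, ih1'⟩, ih2, ih3⟩ := ih
      by_cases hg : (x t).2 < (x t).1 + ε ∧ 1 ≤ (x t).1 ∧ (x t).2 ≤ 2
      · have hgood : good1 ε (x t) = true := by simp [good1, hg]
        have hx1 : (t:ℝ) ≤ (t:ℝ) * (x t).1 := by nlinarith [hg.2.1]
        have hx2 : (t:ℝ) * (x t).2 ≤ 2 * t := by nlinarith [hg.2.2]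
        rw [hgood]
        cases hb2 : s₂ (x t) <;>
          · simp only [payoffPD]
            refine ⟨⟨by linarith, by linarith⟩, by linarith, by linarith⟩
      · have hgood : good1 ε (x t) = false := by simp [good1, hg]
        rw [hgood]
        cases hb2 : s₂ (x t) <;>
          · simp only [payoffPD]
            refine ⟨⟨by linarith, by linarith⟩, by linarith, by linarith⟩
  -- coordinatewise bounds
  have hb1 : ∀ t : ℕ, 1 ≤ t → 1 - 1/(t:ℝ) ≤ (x t).1 := by
    intro t ht
    have htp : (0:ℝ) < t := by exact_mod_cast ht
    have h := (key t ht).1.1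
    have heq : 1 - 1/(t:ℝ) = ((t:ℝ) - 1)/t := by field_simp
    rw [heq, div_le_iff₀ htp]
    nlinarith
  have hb2 : ∀ t : ℕ, 1 ≤ t → (x t).2 ≤ 2 + 1/(t:ℝ) := by
    intro t ht
    have htp : (0:ℝ) < t := by exact_mod_cast ht
    have h := (key t ht).2.1
    have heq : 2 + 1/(t:ℝ) = (2*(t:ℝ) + 1)/t := by field_simp
    rw [heq, le_div_iff₀ htp]
    nlinarith
  have hb3 : ∀ t : ℕ, 1 ≤ t → 0 ≤ (x t).2 := by
    intro t ht
    have htp : (0:ℝ) < t := by exact_mod_cast ht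
    have h := (key t ht).2.2
    nlinarith
  -- limits
  have htend1 : Tendsto (fun t : ℕ => 1 - 1/(t:ℝ)) atTop (nhds 1) := by
    have := tendsto_one_div_atTop_nhds_zero_nat (𝕜 := ℝ)
    simpa using tendsto_const_nhds.sub this
  have htend2 : Tendsto (fun t : ℕ => 2 + 1/(t:ℝ)) atTop (nhds 2) := by
    have := tendsto_one_div_atTop_nhds_zero_nat (𝕜 := ℝ)
    simpa using tendsto_const_nhds.add this
  have hb1' : ∀ t : ℕ, 1 ≤ t → (x t).1 ≤ 3 := by
    intro t ht
    have htp : (0:ℝ) < t := by exact_mod_cast ht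
    have h := (key t ht).1.2
    nlinarith
  have hbdd1 : IsBoundedUnder (· ≤ ·) atTop (fun t : ℕ => (x t).1) := by
    refine ⟨3, eventually_map.2 (eventually_atTop.2 ⟨1, fun t ht => hb1' t ht⟩)⟩
  have hbdd1' : IsBoundedUnder (· ≥ ·) atTop (fun t : ℕ => (x t).1) := by
    refine ⟨0, eventually_map.2 (eventually_atTop.2 ⟨1, fun t ht => ?_⟩)⟩
    have htp : (0:ℝ) < t := by exact_mod_cast ht
    have h := hb1 t ht
    have h2 : 1/(t:ℝ) ≤ 1 := by
      rw [div_le_one htp]; exact_mod_cast ht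
    simp only [ge_iff_le]
    linarith
  have hbdd2 : IsBoundedUnder (· ≥ ·) atTop (fun t : ℕ => (x t).2) := by
    refine ⟨0, eventually_map.2 (eventually_atTop.2 ⟨1, fun t ht => ?_⟩)⟩
    simpa using hb3 t ht
  constructor
  · have heq : liminf (fun t : ℕ => 1 - 1/(t:ℝ)) atTop = 1 := htend1.liminf_eq
    rw [← heq]
    exact liminf_le_liminf (eventually_atTop.2 ⟨1, fun t ht => hb1 t ht⟩)
      htend1.isBoundedUnder_ge hbdd1.isCoboundedUnder_ge
  · have heq : limsup (fun t : ℕ => 2 + 1/(t:ℝ)) atTop = 2 := htend2.limsup_eq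
    rw [← heq]
    exact limsup_le_limsup (eventually_atTop.2 ⟨1, fun t ht => hb2 t ht⟩)
      hbdd2.isCoboundedUnder_le htend2.isBoundedUnder_le
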